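/- In a finite group G, two complements J and J' of a normal abelian subgroup N are conjugate in G if and only if for each prime p, some Sylow p-subgroup of J is conjugate in G to some Sylow p-subgroup of J'. -/

import Mathlib

/-- Two subgroups of `G` are conjugate in `G`. -/
def ConjugateIn {G : Type*} [Group G] (A B : Subgroup G) : Prop :=
  ∃ g : G, A.map (MulAut.conj g).toMonoidHom = B

section Aux
variable {K M : Type*} [Group K] [CommGroup M]

lemma aux_pow [Finite K] (φ : K →* MulAut M) (d : K → M)
    (hd : ∀ x y : K, d (x * y) = d x * φ x (d y))
    (P : Subgroup K) (n : M) (hn : ∀ x ∈ P, d x = n * (φ x n)⁻¹) :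
    ∃ ν : M, ∀ x : K, d x ^ P.index = ν * (φ x ν)⁻¹ := by
  classical
  have : Fintype (K ⧸ P) := Fintype.ofFinite _
  set r : K ⧸ P → K := fun q => q.out with hr
  have hout : ∀ q : K ⧸ P, (↑(r q) : K ⧸ P) = q := fun q => QuotientGroup.out_eq' q
  have hdec : ∀ (x : K) (q : K ⧸ P), ∃ π ∈ P, x * r q = r (x • q) * π := by
    intro x q
    refine ⟨(r (x • q))⁻¹ * (x * r q), ?_, by group⟩
    rw [← QuotientGroup.eq, hout]
    rw [show ((↑(x * r q) : K ⧸ P)) = x • (↑(r q) : K ⧸ P) from rfl, hout]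
  set A : M := ∏ q : K ⧸ P, d (r q) with hA
  set B : M := ∏ q : K ⧸ P, φ (r q) n with hB
  refine ⟨A * B, fun x => ?_⟩
  have h1 : ∏ q : K ⧸ P, d (x * r q) = d x ^ Nat.card (K ⧸ P) * φ x A := by
    simp only [hd, Finset.prod_mul_distrib, Finset.prod_const, Finset.card_univ, hA, map_prod]
    rw [Nat.card_eq_fintype_card]
  have h2 : ∏ q : K ⧸ P, d (x * r q) = (A * B) * (φ x B)⁻¹ := by
    have hterm : ∀ q : K ⧸ P,
        d (x * r q) = (d (r (x • q)) * φ (r (x • q)) n) * (φ x (φ (r q) n))⁻¹ := by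
      intro q
      obtain ⟨π, hπ, hq⟩ := hdec x q
      have : φ (r (x • q)) (φ π n) = φ x (φ (r q) n) := by
        rw [← MulAut.mul_apply, ← map_mul, ← hq, map_mul, MulAut.mul_apply]
      rw [hq, hd, hn π hπ, map_mul, map_inv, this, mul_assoc]
    rw [Finset.prod_congr rfl fun q _ => hterm q, Finset.prod_mul_distrib]
    congr 1
    · rw [← Finset.prod_mul_distrib]
      refine Fintype.prod_equiv (MulAction.toPerm x) _ _ fun q => rfl
    · simp [hB, map_prod, Finset.prod_inv_distrib]
  have := h1.symm.trans h2
  have hm : P.index = Nat.card (K ⧸ P) := rfl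
  rw [hm]
  have hx : d x ^ Nat.card (K ⧸ P) = (A * B) * (φ x B)⁻¹ * (φ x A)⁻¹ := by
    rw [← this]; group
  rw [hx, map_mul]
  group

lemma aux_glue [Finite K] (φ : K →* MulAut M) (d : K → M)
    (hd : ∀ x y : K, d (x * y) = d x * φ x (d y))
    (hloc : ∀ p : ℕ, p.Prime → ∃ m : ℕ, ¬ p ∣ m ∧
      ∃ ν : M, ∀ x : K, d x ^ m = ν * (φ x ν)⁻¹) :
    ∃ ν : M, ∀ x : K, d x = ν * (φ x ν)⁻¹ := by
  classical
  have hd1 : d 1 = 1 := by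
    have := hd 1 1
    rw [mul_one] at this
    have h2 : d 1 = d 1 * φ 1 (d 1) := this
    rw [map_one] at h2
    simpa using h2.symm
  -- the "ideal" of exponents
  set S : AddSubgroup ℤ :=
    { carrier := {m : ℤ | ∃ ν : M, ∀ x : K, d x ^ m = ν * (φ x ν)⁻¹}
      zero_mem' := ⟨1, fun x => by simp⟩
      add_mem' := by
        rintro a b ⟨ν₁, h₁⟩ ⟨ν₂, h₂⟩
        refine ⟨ν₁ * ν₂, fun x => ?_⟩
        rw [zpow_add, h₁, h₂, map_mul, mul_inv]
        simp [mul_comm, mul_left_comm, mul_assoc]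
      neg_mem' := by
        rintro a ⟨ν, h⟩
        refine ⟨ν⁻¹, fun x => ?_⟩
        rw [zpow_neg, h, map_inv, mul_inv, inv_inv] } with hS
  have hnat : ∀ m : ℕ, (∃ ν : M, ∀ x : K, d x ^ m = ν * (φ x ν)⁻¹) → ((m : ℤ) ∈ S) := by
    rintro m ⟨ν, h⟩
    exact ⟨ν, fun x => by rw [zpow_natCast, h]⟩
  have hgcd2 : ∀ a b : ℕ, (a : ℤ) ∈ S → (b : ℤ) ∈ S → ((Nat.gcd a b : ℤ) ∈ S) := by
    intro a b ha hb
    have := Int.gcd_eq_gcd_ab (a : ℤ) (b : ℤ)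
    rw [Int.gcd_natCast_natCast] at this
    rw [this]
    have h1 : (a : ℤ) * Int.gcdA a b = Int.gcdA a b • (a : ℤ) := by
      rw [smul_eq_mul, mul_comm]
    have h2 : (b : ℤ) * Int.gcdB a b = Int.gcdB a b • (b : ℤ) := by
      rw [smul_eq_mul, mul_comm]
    rw [h1, h2]
    exact S.add_mem (S.zsmul_mem ha _) (S.zsmul_mem hb _)
  -- choose exponents for each prime
  choose m hm hν using hloc
  set m' : ℕ → ℕ := fun p => if h : p.Prime then m p h else 1 with hm'
  have hm'S : ∀ p : ℕ, p.Prime → ((m' p : ℤ) ∈ S) := by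
    intro p hp
    rw [hm']
    simp only [dif_pos hp]
    exact hnat _ (hν p hp)
  have hm'dvd : ∀ p : ℕ, p.Prime → ¬ p ∣ m' p := by
    intro p hp
    rw [hm']
    simp only [dif_pos hp]
    exact hm p hp
  set n0 : ℕ := Nat.card K with hn0
  have hn0pos : 0 < n0 := Nat.card_pos
  have hn0S : (n0 : ℤ) ∈ S := by
    refine hnat n0 ?_
    have h1 : ∀ x ∈ (⊥ : Subgroup K), d x = (1 : M) * (φ x (1 : M))⁻¹ := by
      intro x hx
      rw [Subgroup.mem_bot] at hx
      subst hx
      simp [hd1]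
    obtain ⟨ν, hν2⟩ := aux_pow φ d hd ⊥ 1 h1
    rw [Subgroup.index_bot] at hν2
    exact ⟨ν, hν2⟩
  set g : ℕ := n0.primeFactors.gcd m' with hg
  have hgS : (g : ℤ) ∈ S := by
    rw [hg]
    have : ∀ t : Finset ℕ, (∀ p ∈ t, p.Prime) → (((t.gcd m' : ℕ) : ℤ) ∈ S) := by
      intro t
      induction t using Finset.induction_on with
      | empty => intro _; simpa using S.zero_mem
      | insert a t' hnotmem ih =>
        intro hall
        rw [Finset.gcd_insert]
        exact hgcd2 _ _ (hm'S a (hall a (Finset.mem_insert_self a t')))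
          (ih fun p hp => hall p (Finset.mem_insert_of_mem hp))
    exact this _ fun p hp => Nat.prime_of_mem_primeFactors hp
  have hfinal : Nat.gcd g n0 = 1 := by
    by_contra hne
    obtain ⟨q, hq, hqdvd⟩ := Nat.exists_prime_and_dvd hne
    have hqn0 : q ∣ n0 := hqdvd.trans (Nat.gcd_dvd_right g n0)
    have hqmem : q ∈ n0.primeFactors := Nat.mem_primeFactors.mpr ⟨hq, hqn0, hn0pos.ne'⟩
    have : q ∣ m' q := (hqdvd.trans (Nat.gcd_dvd_left g n0)).trans (Finset.gcd_dvd hqmem)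
    exact hm'dvd q hq this
  have h1S : ((1 : ℕ) : ℤ) ∈ S := by
    rw [← hfinal]
    exact hgcd2 _ _ hgS hn0S
  obtain ⟨ν, hν1⟩ := h1S
  exact ⟨ν, fun x => by simpa using hν1 x⟩

end Aux


lemma map_subtype_conj_smul {G : Type*} [Group G] (H : Subgroup G) (h : ↥H) (A : Subgroup ↥H) :
    (Subgroup.map (MulAut.conj h).toMonoidHom A).map H.subtype
      = Subgroup.map (MulAut.conj (h : G)).toMonoidHom (A.map H.subtype) := by
  ext x
  simp only [Subgroup.mem_map]
  constructor
  · rintro ⟨y, ⟨a, ha, rfl⟩, rfl⟩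
    exact ⟨_, ⟨a, ha, rfl⟩, rfl⟩
  · rintro ⟨z, ⟨a, ha, rfl⟩, rfl⟩
    exact ⟨_, ⟨a, ha, rfl⟩, rfl⟩

lemma conj_map_map {G : Type*} [Group G] (a b : G) (A : Subgroup G) :
    Subgroup.map (MulAut.conj a).toMonoidHom (Subgroup.map (MulAut.conj b).toMonoidHom A)
      = Subgroup.map (MulAut.conj (a * b)).toMonoidHom A := by
  rw [Subgroup.map_map]
  congr 1
  ext x
  simp [mul_assoc]

theorem stmt0bwd {G : Type*} [Group G] [Finite G] (N J J' : Subgroup G) [N.Normal]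
    (hab : ∀ a ∈ N, ∀ b ∈ N, a * b = b * a)
    (hJ : Subgroup.IsComplement' N J) (hJ' : Subgroup.IsComplement' N J')
    (hloc : ∀ p : ℕ, p.Prime → ∃ (P : Sylow p J) (P' : Sylow p J'),
        ConjugateIn ((P : Subgroup J).map J.subtype) ((P' : Subgroup J').map J'.subtype)) :
    ConjugateIn J J' := by
  classical
  letI hcomm : CommGroup ↥N := { (inferInstance : Group ↥N) with mul_comm := fun a b => Subtype.ext (hab a a.2 b b.2) }
  have hJc : Subgroup.IsComplement (N : Set G) (J : Set G) := hJ
  have hJ'c : Subgroup.IsComplement (N : Set G) (J' : Set G) := hJ'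
  have huniq : ∀ a b c e : G, a ∈ N → b ∈ N → c ∈ J → e ∈ J → a * c = b * e → a = b ∧ c = e := by
    intro a b c e ha hb hc he heq
    have h0 := hJc.1 (a₁ := ⟨⟨a, ha⟩, ⟨c, hc⟩⟩) (a₂ := ⟨⟨b, hb⟩, ⟨e, he⟩⟩) heq
    exact ⟨congrArg (fun z => (z.1 : G)) h0, congrArg (fun z => (z.2 : G)) h0⟩
  -- the 1-cocycle associated to the pair of complements
  set d : ↥J → ↥N := fun j =>
    ⟨(↑((hJ'c.equiv (j : G)).1))⁻¹, N.inv_mem ((hJ'c.equiv (j : G)).1.2)⟩ with hdef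
  have hdmem : ∀ j : ↥J, (↑(d j) : G) * ↑j ∈ J' := by
    intro j
    have h := hJ'c.equiv_snd_eq_inv_mul (j : G)
    have : (↑(d j) : G) * ↑j = ↑((hJ'c.equiv (j : G)).2) := by
      rw [h, hdef]
    rw [this]
    exact ((hJ'c.equiv (j : G)).2).2
  have hchar : ∀ (n : G) (j : ↥J), n ∈ N → n * ↑j ∈ J' → n = ↑(d j) := by
    intro n j hn hj'
    have h1 : (n * ↑j)⁻¹ * ((d j : G) * ↑j) ∈ J' := J'.mul_mem (J'.inv_mem hj') (hdmem j)
    have h2 : (n * ↑j)⁻¹ * ((d j : G) * ↑j) = (↑j)⁻¹ * (n⁻¹ * ↑(d j)) * ↑j := by group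
    have h3 : (n * ↑j)⁻¹ * ((d j : G) * ↑j) ∈ N := by
      rw [h2]
      exact Subgroup.Normal.conj_mem' inferInstance _ (N.mul_mem (N.inv_mem hn) (d j).2) ↑j
    have h4 : (n * ↑j)⁻¹ * ((d j : G) * ↑j) = 1 := by
      have := Subgroup.disjoint_def.mp hJ'.disjoint h3 h1
      exact this
    have h5 : n * ↑j = (d j : G) * ↑j := by
      rw [← mul_one (n * (j : G)), ← h4]
      group
    exact mul_right_cancel h5
  set φ : ↥J →* MulAut ↥N := MulAut.conjNormal.comp J.subtype with hφdef
  have hφ : ∀ (j : ↥J) (n : ↥N), (↑(φ j n) : G) = ↑j * ↑n * (↑j)⁻¹ := fun j n => rfl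
  have hd : ∀ x y : ↥J, d (x * y) = d x * φ x (d y) := by
    intro x y
    have hmem : ((d x : G) * (↑x * ↑(d y) * (↑x)⁻¹)) ∈ N :=
      N.mul_mem (d x).2 (Subgroup.Normal.conj_mem inferInstance _ (d y).2 ↑x)
    have hJ'mem : ((d x : G) * (↑x * ↑(d y) * (↑x)⁻¹)) * ↑(x * y) ∈ J' := by
      have heq : ((d x : G) * (↑x * ↑(d y) * (↑x)⁻¹)) * ↑(x * y)
          = ((d x : G) * ↑x) * ((d y : G) * ↑y) := by
        push_cast
        group
      rw [heq]
      exact J'.mul_mem (hdmem x) (hdmem y)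
    have hc := hchar _ (x * y) hmem hJ'mem
    refine Subtype.ext ?_
    rw [← hc]
    push_cast [hφ]
    ring_nf
  -- the local hypothesis gives local splitting of the cocycle
  have hlocal : ∀ p : ℕ, p.Prime → ∃ m : ℕ, ¬ p ∣ m ∧
      ∃ ν : ↥N, ∀ x : ↥J, d x ^ m = ν * (φ x ν)⁻¹ := by
    intro p hp
    haveI : Fact p.Prime := ⟨hp⟩
    obtain ⟨P, P', g, hg⟩ := hloc p hp
    -- the bijection J ≃* J' induced by the cocycle
    have hFmul : ∀ x y : ↥J,
        ((d (x * y) : G) * ↑(x * y)) = ((d x : G) * ↑x) * ((d y : G) * ↑y) := by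
      intro x y
      rw [hd x y]
      push_cast [hφ]
      group
    set Fc : ↥J →* ↥J' := MonoidHom.mk' (fun j => ⟨(d j : G) * ↑j, hdmem j⟩)
      (fun x y => Subtype.ext (hFmul x y)) with hFc
    have hFinj : Function.Injective Fc := by
      intro x y hxy
      have h1 : (d x : G) * ↑x = (d y : G) * ↑y := congrArg Subtype.val hxy
      exact Subtype.ext (huniq _ _ _ _ (d x).2 (d y).2 x.2 y.2 h1).2
    have hcard : Nat.card ↥J = Nat.card ↥J' := by
      rw [← hJ.symm.index_eq_card, ← hJ'.symm.index_eq_card]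
    have hFbij : Function.Bijective Fc :=
      (Nat.bijective_iff_injective_and_card Fc).mpr ⟨hFinj, hcard⟩
    set e : ↥J ≃* ↥J' := MulEquiv.ofBijective Fc hFbij with he
    set Q' : Sylow p ↥J' := P.comapOfInjective e.symm.toMonoidHom e.symm.injective
      (fun x _ => ⟨e x, by simp⟩) with hQ'
    obtain ⟨j', hj'⟩ := MulAction.exists_smul_eq ↥J' P' Q'
    -- identify subgroups of G
    have hQ'eq : Subgroup.map J'.subtype ↑Q'
        = Subgroup.map (MulAut.conj ((j' : G) * g)).toMonoidHom
            (Subgroup.map J.subtype ↑P) := by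
      rw [← hj']
      have h1 : ((j' • P' : Sylow p ↥J') : Subgroup ↥J')
          = Subgroup.map (MulAut.conj j').toMonoidHom ↑P' := rfl
      rw [h1, map_subtype_conj_smul, ← hg, conj_map_map]
    obtain ⟨n₀, hn₀N, k, hwdec⟩ :
        ∃ n₀ ∈ N, ∃ k : ↥J, (↑j' : G) * g = n₀ * ↑k := by
      refine ⟨↑((hJc.equiv ((↑j' : G) * g)).1), ((hJc.equiv ((↑j' : G) * g)).1).2,
        ⟨↑((hJc.equiv ((↑j' : G) * g)).2), ((hJc.equiv ((↑j' : G) * g)).2).2⟩, ?_⟩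
      exact (hJc.equiv_fst_mul_equiv_snd ((↑j' : G) * g)).symm
    rw [hwdec] at hQ'eq
    set Q : Sylow p ↥J := k • P with hQ
    have hQmap : Subgroup.map J.subtype ↑Q
        = Subgroup.map (MulAut.conj (k : G)).toMonoidHom (Subgroup.map J.subtype ↑P) := by
      rw [hQ]
      have h1 : ((k • P : Sylow p ↥J) : Subgroup ↥J)
          = Subgroup.map (MulAut.conj k).toMonoidHom ↑P := rfl
      rw [h1, map_subtype_conj_smul]
    have hn : ∀ x ∈ (↑Q : Subgroup ↥J),
        d x = ⟨n₀, hn₀N⟩ * (φ x ⟨n₀, hn₀N⟩)⁻¹ := by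
      intro x hx
      have hx1 : (↑x : G) ∈ Subgroup.map J.subtype ↑Q := Subgroup.mem_map_of_mem _ hx
      have hx2 : n₀ * ↑x * n₀⁻¹ ∈ Subgroup.map J'.subtype ↑Q' := by
        rw [hQ'eq, ← conj_map_map, ← hQmap]
        exact Subgroup.mem_map_of_mem _ hx1
      have hx3 : n₀ * ↑x * n₀⁻¹ ∈ J' := by
        exact Subgroup.map_subtype_le _ hx2
      have hx4 : (n₀ * (↑x * n₀⁻¹ * (↑x)⁻¹)) * ↑x ∈ J' := by
        have : (n₀ * (↑x * n₀⁻¹ * (↑x)⁻¹)) * ↑x = n₀ * ↑x * n₀⁻¹ := by group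
        rw [this]; exact hx3
      have hx5 : n₀ * (↑x * n₀⁻¹ * (↑x)⁻¹) ∈ N :=
        N.mul_mem hn₀N (Subgroup.Normal.conj_mem inferInstance _ (N.inv_mem hn₀N) ↑x)
      have hc := hchar _ x hx5 hx4
      refine Subtype.ext ?_
      rw [← hc]
      push_cast [hφ]
      group
    obtain ⟨ν, hν⟩ := aux_pow φ d hd ↑Q ⟨n₀, hn₀N⟩ hn
    exact ⟨(↑Q : Subgroup ↥J).index, Q.not_dvd_index, ν, hν⟩
  obtain ⟨ν, hν⟩ := aux_glue φ d hd hlocal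
  refine ⟨↑ν, ?_⟩
  have hcoe : ∀ x : ↥J, (↑(d x) : G) = ↑ν * (↑x * (↑ν)⁻¹ * (↑x)⁻¹) := by
    intro x
    rw [hν x]
    push_cast [hφ]
    group
  ext x
  simp only [Subgroup.mem_map]
  constructor
  · rintro ⟨a, ha, rfl⟩
    have h1 : (MulAut.conj (↑ν : G)).toMonoidHom a = (↑(d ⟨a, ha⟩) : G) * a := by
      rw [hcoe ⟨a, ha⟩]
      simp [MulAut.conj_apply]
      group
    rw [h1]
    exact hdmem ⟨a, ha⟩
  · intro hx
    set k₁ : ↥J := ⟨↑((hJc.equiv x).2), ((hJc.equiv x).2).2⟩ with hk₁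
    have hx1 : ↑((hJc.equiv x).1) * (k₁ : G) = x := hJc.equiv_fst_mul_equiv_snd x
    have hmem1 : (↑((hJc.equiv x).1) : G) ∈ N := ((hJc.equiv x).1).2
    have hc := hchar _ k₁ hmem1 (by rw [hx1]; exact hx)
    refine ⟨↑k₁, k₁.2, ?_⟩
    have : (MulAut.conj (↑ν : G)).toMonoidHom ↑k₁ = (↑(d k₁) : G) * ↑k₁ := by
      rw [hcoe k₁]
      simp [MulAut.conj_apply]
      group
    rw [this, ← hc, hx1]

theorem stmt0fwd' {G : Type*} [Group G] [Finite G] (N J J' : Subgroup G) [N.Normal]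
    (hJ : Subgroup.IsComplement' N J) (hJ' : Subgroup.IsComplement' N J') :
    ConjugateIn J J' →
      ∀ p : ℕ, p.Prime → ∃ (P : Sylow p J) (P' : Sylow p J'),
        ConjugateIn ((P : Subgroup J).map J.subtype) ((P' : Subgroup J').map J'.subtype) := by
  rintro ⟨g, hg⟩ p hp
  haveI : Fact p.Prime := ⟨hp⟩
  obtain ⟨P⟩ : Nonempty (Sylow p J) := Sylow.nonempty
  have hinj : Function.Injective (MulAut.conj g).toMonoidHom := (MulAut.conj g).injective
  let e : ↥J ≃* ↥J' :=
    (J.equivMapOfInjective (MulAut.conj g).toMonoidHom hinj).trans (MulEquiv.subgroupCongr hg)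
  have he : ∀ x : ↥J, (↑(e x) : G) = g * x * g⁻¹ := fun x => rfl
  have hrange : (P : Subgroup ↥J) ≤ e.symm.toMonoidHom.range := fun x _ => ⟨e x, by simp⟩
  refine ⟨P, P.comapOfInjective e.symm.toMonoidHom e.symm.injective hrange, g, ?_⟩
  ext x
  simp only [Sylow.coe_comapOfInjective, Subgroup.mem_map, Subgroup.mem_comap]
  constructor
  · rintro ⟨y, ⟨a, ha, rfl⟩, rfl⟩
    refine ⟨e a, show e.symm (e a) ∈ (P : Subgroup J) by simpa using ha, ?_⟩
    simp [he a]
  · rintro ⟨b, hb, rfl⟩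
    refine ⟨↑(e.symm b), ⟨e.symm b, hb, rfl⟩, ?_⟩
    have h2 := he (e.symm b)
    simp only [MulEquiv.apply_symm_apply] at h2
    simpa using h2.symm

/-- **Evans–Shin.**  In a finite group, two complements `J`, `J'` of a normal abelian
subgroup `N` are conjugate iff they are locally conjugate, i.e. for each prime `p`
some Sylow `p`-subgroup of `J` is conjugate in `G` to some Sylow `p`-subgroup of `J'`. -/
theorem stmt0 {G : Type*} [Group G] [Finite G] (N J J' : Subgroup G) [N.Normal]
    (hab : ∀ a ∈ N, ∀ b ∈ N, a * b = b * a)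
    (hJ : Subgroup.IsComplement' N J) (hJ' : Subgroup.IsComplement' N J') :
    ConjugateIn J J' ↔
      ∀ p : ℕ, p.Prime → ∃ (P : Sylow p J) (P' : Sylow p J'),
        ConjugateIn ((P : Subgroup J).map J.subtype) ((P' : Subgroup J').map J'.subtype) := by
  exact ⟨stmt0fwd' N J J' hJ hJ', stmt0bwd N J J' hab hJ hJ'⟩
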